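/- Let n ≥ 1 and let F be a subset of a De Morgan lattice L. Then F is an n-prime filter on L (a filter whose complement is an n-ideal) if and only if there exists a homomorphism of De Morgan lattices h : L → (Fin n → Bool × Bool) such that F = {x : ∀ i, (h x i).1 = true}, i.e., F is the preimage of the designated set of the direct power (DM₁)ⁿ. -/

import Mathlib

/-- A De Morgan lattice: a distributive lattice with an antitone involution. -/
class DeMorgan (L : Type*) extends DistribLattice L where
  dneg : L → L
  dneg_dneg : ∀ x : L, dneg (dneg x) = x
  dneg_sup : ∀ x y : L, dneg (x ⊔ y) = dneg x ⊓ dneg y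

prefix:max "∼" => DeMorgan.dneg

section Defs

variable {α : Type*}

/-- An upward closed subset of a lattice. -/
def IsUpset [Lattice α] (F : Set α) : Prop :=
  ∀ ⦃x y : α⦄, x ∈ F → x ≤ y → y ∈ F

/-- A lattice filter: an upset closed under binary meets. -/
def IsLatFilter [Lattice α] (F : Set α) : Prop :=
  IsUpset F ∧ ∀ x y : α, x ∈ F → y ∈ F → x ⊓ y ∈ F

/-- An `n`-filter: an upset such that for every nonempty finite `Y`, if the meet of
every nonempty subset of `Y` of size at most `n` lies in `F`, then so does the meet of `Y`. -/
def IsNFilter [Lattice α] (n : ℕ) (F : Set α) : Prop :=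
  IsUpset F ∧ ∀ (Y : Finset α) (hY : Y.Nonempty),
    (∀ (X : Finset α) (hX : X.Nonempty), X ⊆ Y → X.card ≤ n → X.inf' hX id ∈ F) →
    Y.inf' hY id ∈ F

/-- A prime upset: `x ⊔ y ∈ F` implies `x ∈ F` or `y ∈ F`. -/
def IsPrimeUpset [Lattice α] (F : Set α) : Prop :=
  ∀ x y : α, x ⊔ y ∈ F → x ∈ F ∨ y ∈ F

/-- A downward closed subset of a lattice. -/
def IsDownset [Lattice α] (I : Set α) : Prop :=
  ∀ ⦃x y : α⦄, x ∈ I → y ≤ x → y ∈ I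

/-- A lattice ideal: a downset closed under binary joins. -/
def IsIdeal [Lattice α] (I : Set α) : Prop :=
  IsDownset I ∧ ∀ x y : α, x ∈ I → y ∈ I → x ⊔ y ∈ I

/-- An `n`-ideal: the order dual notion of an `n`-filter. -/
def IsNIdeal [Lattice α] (n : ℕ) (I : Set α) : Prop :=
  IsDownset I ∧ ∀ (Y : Finset α) (hY : Y.Nonempty),
    (∀ (X : Finset α) (hX : X.Nonempty), X ⊆ Y → X.card ≤ n → X.sup' hX id ∈ I) →
    Y.sup' hY id ∈ I

variable {L : Type*} [DeMorgan L]

/-- Almost complete upset: `x ∈ F` implies `x ⊓ (y ⊔ ∼y) ∈ F`. -/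
def AlmostComplete (F : Set L) : Prop := ∀ x ∈ F, ∀ y : L, x ⊓ (y ⊔ ∼y) ∈ F

/-- Complete upset: almost complete and nonempty. -/
def IsCompleteUpset (F : Set L) : Prop := AlmostComplete F ∧ F.Nonempty

/-- Almost consistent upset: `(x ⊓ ∼x) ⊔ y ∈ F` implies `y ∈ F`. -/
def AlmostConsistent (F : Set L) : Prop := ∀ x y : L, (x ⊓ ∼x) ⊔ y ∈ F → y ∈ F

/-- Consistent upset: almost consistent and not total. -/
def IsConsistentUpset (F : Set L) : Prop := AlmostConsistent F ∧ F ≠ Set.univ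

/-- Classical upset: complete and consistent. -/
def IsClassicalUpset (F : Set L) : Prop := IsCompleteUpset F ∧ IsConsistentUpset F

/-- Kalman upset. -/
def IsKalmanUpset (F : Set L) : Prop :=
  ∀ x y z u : L, ((x ⊓ ∼x) ⊓ z) ⊔ u ∈ F → ((y ⊔ ∼y) ⊓ z) ⊔ u ∈ F

/-- A homomorphism of De Morgan lattices. -/
def IsDMHom {L M : Type*} [DeMorgan L] [DeMorgan M] (h : L → M) : Prop :=
  (∀ x y : L, h (x ⊓ y) = h x ⊓ h y) ∧ (∀ x y : L, h (x ⊔ y) = h x ⊔ h y) ∧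
    ∀ x : L, h (∼x) = ∼(h x)

/-- The filter generated by all elements of the form `x ⊔ ∼x`. -/
def Fcomp (L : Type*) [DeMorgan L] : Set L :=
  {a | ∃ (s : Finset L) (hs : s.Nonempty), s.inf' hs (fun x => x ⊔ ∼x) ≤ a}

/-- The `n`-filter generated by a set. -/
def nFilterGen (n : ℕ) (U : Set L) : Set L :=
  ⋂₀ {F : Set L | IsNFilter n F ∧ U ⊆ F}

/-- `Comp U`. -/
def CompCl (U : Set L) : Set L := {x | ∃ a ∈ U, ∃ f ∈ Fcomp L, a ⊓ f ≤ x}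

/-- `Cons U`. -/
def ConsCl (U : Set L) : Set L := {x | ∃ f ∈ Fcomp L, ∼f ⊔ x ∈ U}

/-- A congruence of De Morgan lattices, as a binary relation. -/
def IsCongruence (θ : L → L → Prop) : Prop :=
  Equivalence θ ∧
  (∀ a b c d : L, θ a b → θ c d → θ (a ⊓ c) (b ⊓ d)) ∧
  (∀ a b c d : L, θ a b → θ c d → θ (a ⊔ c) (b ⊔ d)) ∧
  ∀ a b : L, θ a b → θ (∼a) (∼b)

end Defs

/-- The four-element De Morgan lattice `DM₁` on `Bool × Bool`. -/
instance : DeMorgan (Bool × Bool) :=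
  { (inferInstance : DistribLattice (Bool × Bool)) with
    dneg := fun p => (!p.2, !p.1)
    dneg_dneg := by decide
    dneg_sup := by decide }

/-- Powers of `DM₁`, with componentwise operations. -/
instance {ι : Type*} : DeMorgan (ι → Bool × Bool) :=
  { (inferInstance : DistribLattice (ι → Bool × Bool)) with
    dneg := fun f i => ∼(f i)
    dneg_dneg := fun f => funext fun i => DeMorgan.dneg_dneg (f i)
    dneg_sup := fun f g => funext fun i => DeMorgan.dneg_sup (f i) (g i) }

section PrimeDecomp
variable {α : Type*} {β : Type*} [DistribLattice α]

theorem mem_inf'_of_filter {F : Set α} (hF : IsLatFilter F) {Y : Finset β} (hY : Y.Nonempty)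
    {f : β → α} (h : ∀ y ∈ Y, f y ∈ F) : Y.inf' hY f ∈ F := by
  induction hY using Finset.Nonempty.cons_induction with
  | singleton a => simpa using h a (by simp)
  | cons a s ha hs ih =>
    rw [Finset.inf'_cons (H := hs)]
    exact hF.2 _ _ (h a (by simp)) (ih fun y hy => h y (by simp [hy]))

theorem mem_sup'_of_ideal {I : Set α} (hI : IsIdeal I) {Y : Finset β} (hY : Y.Nonempty)
    {f : β → α} (h : ∀ y ∈ Y, f y ∈ I) : Y.sup' hY f ∈ I := by
  induction hY using Finset.Nonempty.cons_induction with
  | singleton a => simpa using h a (by simp)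
  | cons a s ha hs ih =>
    rw [Finset.sup'_cons (H := hs)]
    exact hI.2 _ _ (h a (by simp)) (ih fun y hy => h y (by simp [hy]))

theorem inf'_sup_const {Y : Finset β} (hY : Y.Nonempty) (c : α) (v : β → α) :
    Y.inf' hY (fun i => c ⊔ v i) = c ⊔ Y.inf' hY v := by
  induction hY using Finset.Nonempty.cons_induction with
  | singleton a => simp
  | cons a s ha hs ih => rw [Finset.inf'_cons (H := hs), Finset.inf'_cons (H := hs), ih, ← sup_inf_left]

theorem sup'_inf_const {Y : Finset β} (hY : Y.Nonempty) (c : α) (v : β → α) :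
    Y.sup' hY (fun i => c ⊓ v i) = c ⊓ Y.sup' hY v := by
  induction hY using Finset.Nonempty.cons_induction with
  | singleton a => simp
  | cons a s ha hs ih => rw [Finset.sup'_cons (H := hs), Finset.sup'_cons (H := hs), ih, ← inf_sup_left]

/-- The `(m+1)`-tuple reformulation of the `m`-ideal condition. -/
theorem nideal_fin {I : Set α} {m : ℕ} (hm : 1 ≤ m) (hI : IsNIdeal m I) (z : Fin (m + 1) → α)
    (h : ∀ i : Fin (m + 1), ∀ hne : ((Finset.univ : Finset (Fin (m + 1))).erase i).Nonempty,
      (Finset.univ.erase i).sup' hne z ∈ I)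
    (hu : (Finset.univ : Finset (Fin (m + 1))).Nonempty) :
    Finset.univ.sup' hu z ∈ I := by
  classical
  have herase : ∀ i j : Fin (m + 1), i ≠ j → i ∈ (Finset.univ : Finset (Fin (m+1))).erase j :=
    fun i j hij => Finset.mem_erase.mpr ⟨hij, Finset.mem_univ i⟩
  by_cases hinj : Function.Injective z
  · have hYne : (Finset.univ.image z).Nonempty :=
      ⟨z 0, Finset.mem_image_of_mem _ (Finset.mem_univ (0 : Fin (m+1)))⟩
    have hYcard : (Finset.univ.image z).card = m + 1 := by
      rw [Finset.card_image_of_injective _ hinj, Finset.card_univ, Fintype.card_fin]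
    have hsup : (Finset.univ.image z).sup' hYne id = Finset.univ.sup' hu z := by
      apply le_antisymm
      · apply Finset.sup'_le; intro b hb
        obtain ⟨k, -, rfl⟩ := Finset.mem_image.mp hb
        exact Finset.le_sup' z (Finset.mem_univ k)
      · apply Finset.sup'_le; intro k _
        exact Finset.le_sup' id (Finset.mem_image_of_mem z (Finset.mem_univ k))
    rw [← hsup]
    apply hI.2 _ hYne
    intro X hX hXY hXcard
    have hne : X ≠ Finset.univ.image z := by
      intro he; rw [he] at hXcard; rw [hYcard] at hXcard; omega
    obtain ⟨b, hbY, hbX⟩ := Finset.exists_of_ssubset (hXY.ssubset_of_ne hne)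
    obtain ⟨i, -, rfl⟩ := Finset.mem_image.mp hbY
    have hEne : ((Finset.univ : Finset (Fin (m+1))).erase i).Nonempty := by
      rw [← Finset.card_pos, Finset.card_erase_of_mem (Finset.mem_univ i),
        Finset.card_univ, Fintype.card_fin]
      omega
    refine hI.1 (h i hEne) ?_
    apply Finset.sup'_le
    intro x hx
    obtain ⟨k, -, rfl⟩ := Finset.mem_image.mp (hXY hx)
    have hki : k ≠ i := fun he => hbX (he ▸ hx)
    exact Finset.le_sup' z (herase k i hki)
  · rw [Function.not_injective_iff] at hinj
    obtain ⟨i, j, hzij, hij⟩ := hinj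
    have hEne : ((Finset.univ : Finset (Fin (m+1))).erase j).Nonempty :=
      ⟨i, herase i j hij⟩
    refine hI.1 (h j hEne) ?_
    apply Finset.sup'_le
    intro k _
    rcases eq_or_ne k j with rfl | hkj
    · rw [← hzij]; exact Finset.le_sup' z (herase i k hij)
    · exact Finset.le_sup' z (herase k j hkj)

/-- Zorn: maximal ideal containing a given element and disjoint from an upset. -/
theorem exists_maximal_ideal {F : Set α} (hup : IsUpset F) {s : α} (hs : s ∉ F) :
    ∃ I : Set α, IsIdeal I ∧ s ∈ I ∧ (∀ x ∈ I, x ∉ F) ∧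
      ∀ J : Set α, IsIdeal J → (∀ x ∈ J, x ∉ F) → I ⊆ J → J ⊆ I := by
  set S : Set (Set α) := {I | IsIdeal I ∧ s ∈ I ∧ ∀ x ∈ I, x ∉ F} with hS
  have h1 : {x | x ≤ s} ∈ S :=
    ⟨⟨fun x y hx hyx => le_trans hyx hx, fun x y hx hy => sup_le hx hy⟩, le_refl s,
      fun x hx hxF => hs (hup hxF hx)⟩
  have hchaincond : ∀ c ⊆ S, IsChain (fun x1 x2 => x1 ⊆ x2) c → c.Nonempty →
      ∃ ub ∈ S, ∀ t ∈ c, t ⊆ ub := by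
    intro c hcS hchain hcne
    refine ⟨⋃₀ c, ⟨⟨?_, ?_⟩, ?_, ?_⟩, fun t ht => Set.subset_sUnion_of_mem ht⟩
    · rintro x y ⟨t, htc, hxt⟩ hyx
      exact ⟨t, htc, ((hcS htc).1.1 hxt hyx)⟩
    · rintro x y ⟨t, htc, hxt⟩ ⟨t', ht'c, hyt'⟩
      rcases hchain.total htc ht'c with h | h
      · exact ⟨t', ht'c, (hcS ht'c).1.2 _ _ (h hxt) hyt'⟩
      · exact ⟨t, htc, (hcS htc).1.2 _ _ hxt (h hyt')⟩
    · obtain ⟨t, htc⟩ := hcne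
      exact ⟨t, htc, (hcS htc).2.1⟩
    · rintro x ⟨t, htc, hxt⟩
      exact (hcS htc).2.2 x hxt
  obtain ⟨I, -, hmax⟩ := zorn_subset_nonempty S hchaincond _ h1
  refine ⟨I, hmax.1.1, hmax.1.2.1, hmax.1.2.2, fun J hJ hJF hIJ => ?_⟩
  exact hmax.2 ⟨hJ, hIJ hmax.1.2.1, hJF⟩ hIJ

theorem maximal_ideal_join {F I : Set α} (hup : IsUpset F) (hI : IsIdeal I)
    (hne : I.Nonempty) (hmax : ∀ J : Set α, IsIdeal J → (∀ x ∈ J, x ∉ F) → I ⊆ J → J ⊆ I)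
    {w : α} (hw : w ∉ I) : ∃ v ∈ I, w ⊔ v ∈ F := by
  by_contra hcon
  push_neg at hcon
  set J : Set α := {x | ∃ u ∈ I, x ≤ w ⊔ u} with hJ
  have hJI : IsIdeal J := by
    constructor
    · rintro x y ⟨u, hu, hxu⟩ hyx; exact ⟨u, hu, le_trans hyx hxu⟩
    · rintro x y ⟨u, hu, hxu⟩ ⟨u', hu', hyu'⟩
      refine ⟨u ⊔ u', hI.2 _ _ hu hu', sup_le ?_ ?_⟩
      · exact le_trans hxu (sup_le_sup_left le_sup_left _)
      · exact le_trans hyu' (sup_le_sup_left le_sup_right _)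
  have hJF : ∀ x ∈ J, x ∉ F := by
    rintro x ⟨u, hu, hxu⟩ hxF
    exact hcon u hu (hup hxF hxu)
  have hIJ : I ⊆ J := fun x hx => ⟨x, hx, le_sup_right⟩
  obtain ⟨u, hu⟩ := hne
  exact hw (hmax J hJI hJF hIJ ⟨u, hu, le_sup_left⟩)

theorem maximal_ideal_prime {F I : Set α} (hF : IsLatFilter F) (hI : IsIdeal I)
    (hne : I.Nonempty) (hdisj : ∀ x ∈ I, x ∉ F)
    (hmax : ∀ J : Set α, IsIdeal J → (∀ x ∈ J, x ∉ F) → I ⊆ J → J ⊆ I) :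
    ∀ x y : α, x ⊓ y ∈ I → x ∈ I ∨ y ∈ I := by
  intro x y hxy
  by_contra hc
  push_neg at hc
  obtain ⟨u, hu, huF⟩ := maximal_ideal_join hF.1 hI hne hmax hc.1
  obtain ⟨v, hv, hvF⟩ := maximal_ideal_join hF.1 hI hne hmax hc.2
  have hm : (x ⊔ u) ⊓ (y ⊔ v) ∈ F := hF.2 _ _ huF hvF
  have hle : (x ⊔ u) ⊓ (y ⊔ v) ≤ (x ⊓ y) ⊔ (u ⊔ v) := by
    calc (x ⊔ u) ⊓ (y ⊔ v) ≤ (x ⊔ (u ⊔ v)) ⊓ (y ⊔ (u ⊔ v)) :=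
          inf_le_inf (sup_le_sup_left le_sup_left _) (sup_le_sup_left le_sup_right _)
      _ = (x ⊓ y) ⊔ (u ⊔ v) := (sup_inf_right x y (u ⊔ v)).symm
  have : (x ⊔ u) ⊓ (y ⊔ v) ∈ I :=
    hI.1 (hI.2 _ _ hxy (hI.2 _ _ hu hv)) hle
  exact hdisj _ this hm
end PrimeDecomp
section PrimeDecomp2
variable {α : Type*} [DistribLattice α]

/-- If `Fᶜ` is an `m`-ideal but not an `(m-1)`-ideal, there is an `m`-element witness:
a finset of size `m` whose join is in `F` but all proper nonempty subjoins are not. -/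
theorem exists_witness {F : Set α} (hup : IsUpset F) {m : ℕ} (hm : 1 ≤ m)
    (hok : IsNIdeal m Fᶜ) (hbad : ¬ IsNIdeal (m - 1) Fᶜ) :
    ∃ Y : Finset α, Y.card = m ∧ ∃ hY : Y.Nonempty, Y.sup' hY id ∈ F ∧
      ∀ Z ⊆ Y, Z ≠ Y → ∀ hZ : Z.Nonempty, Z.sup' hZ id ∉ F := by
  classical
  have hdown : IsDownset Fᶜ := fun x y hx hyx hy => hx (hup hy hyx)
  set Q : ℕ → Prop := fun k => ∃ Y : Finset α, Y.card = k ∧ ∃ hY : Y.Nonempty,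
    (∀ (X : Finset α) (hX : X.Nonempty), X ⊆ Y → X.card ≤ m - 1 → X.sup' hX id ∈ Fᶜ) ∧
    Y.sup' hY id ∈ F with hQ
  have hex : ∃ k, Q k := by
    by_contra hnone
    push_neg at hnone
    apply hbad
    refine ⟨hdown, ?_⟩
    intro Y hY hyp
    by_contra hsY
    exact hnone Y.card ⟨Y, rfl, hY, hyp, not_not.mp hsY⟩
  obtain ⟨Y, hcard, hYne, hhyp, hsupF⟩ := Nat.find_spec hex
  have hproper : ∀ Z ⊆ Y, Z ≠ Y → ∀ hZ : Z.Nonempty, Z.sup' hZ id ∉ F := by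
    intro Z hZY hne hZne hZF
    have hlt : Z.card < Nat.find hex := by
      rw [← hcard]
      exact Finset.card_lt_card (hZY.ssubset_of_ne hne)
    exact Nat.find_min hex hlt ⟨Z, rfl, hZne, fun X hX hXZ hXc => hhyp X hX (hXZ.trans hZY) hXc, hZF⟩
  have hge : m ≤ Y.card := by
    by_contra hlt
    push_neg at hlt
    exact hhyp Y hYne (le_refl _) (by omega) hsupF
  have hle : Y.card ≤ m := by
    by_contra hgt
    push_neg at hgt
    refine (hok.2 Y hYne ?_) hsupF
    intro X hX hXY hXc
    have hne : X ≠ Y := by intro he; rw [he] at hXc; omega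
    exact hproper X hXY hne hX
  exact ⟨Y, by omega, hYne, hsupF, hproper⟩

/-- Main construction: given a size-`m` witness, `F` is an intersection of `m` prime filters. -/
theorem step_decomp {F : Set α} (hF : IsLatFilter F) {m : ℕ} (hm : 2 ≤ m)
    (hok : IsNIdeal m Fᶜ) (Y : Finset α) (hcard : Y.card = m) (hYne : Y.Nonempty)
    (hsupF : Y.sup' hYne id ∈ F)
    (hprop : ∀ Z ⊆ Y, Z ≠ Y → ∀ hZ : Z.Nonempty, Z.sup' hZ id ∉ F) :
    ∃ P : Fin m → Set α, (∀ i, IsLatFilter (P i) ∧ IsPrimeUpset (P i)) ∧ F = ⋂ i, P i := by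
  classical
  have hmpos : 0 < m := by omega
  haveI : Nonempty (Fin m) := ⟨⟨0, hmpos⟩⟩
  -- enumerate Y
  have e := Finset.equivFinOfCardEq hcard
  set y : Fin m → α := fun i => ((e.symm i : Y) : α) with hy
  have hyY : ∀ i, y i ∈ Y := fun i => (e.symm i).2
  have hyinj : Function.Injective y := fun i j h => e.symm.injective (Subtype.ext h)
  -- seeds
  have hEne : ∀ i : Fin m, (Y.erase (y i)).Nonempty := by
    intro i
    rw [← Finset.card_pos, Finset.card_erase_of_mem (hyY i), hcard]
    omega
  have hsF : ∀ i, (Y.erase (y i)).sup' (hEne i) id ∉ F := fun i =>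
    hprop _ (Finset.erase_subset _ _) (Finset.erase_ne_self.mpr (hyY i)) (hEne i)
  have hys : ∀ i j, j ≠ i → y j ≤ (Y.erase (y i)).sup' (hEne i) id := fun i j hne =>
    Finset.le_sup' id (Finset.mem_erase.mpr ⟨fun h => hne (hyinj h), hyY j⟩)
  -- maximal disjoint ideals containing the seeds
  choose I hIid hIs hIdisj hImax using fun i => exists_maximal_ideal hF.1 (hsF i)
  have hIne : ∀ i, (I i).Nonempty := fun i => ⟨_, hIs i⟩
  have hyI : ∀ i j, j ≠ i → y j ∈ I i := fun i j h => (hIid i).1 (hIs i) (hys i j h)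
  have hprime : ∀ i, ∀ x z : α, x ⊓ z ∈ I i → x ∈ I i ∨ z ∈ I i := fun i =>
    maximal_ideal_prime hF (hIid i) (hIne i) (hIdisj i) (hImax i)
  have hyiI : ∀ i, y i ∉ I i := by
    intro i hyi
    have hsupI : Y.sup' hYne id ∈ I i := by
      refine (hIid i).1 ((hIid i).2 _ _ hyi (hIs i)) ?_
      apply Finset.sup'_le
      intro b hb
      rcases eq_or_ne b (y i) with rfl | hbne
      · exact le_sup_left
      · exact le_trans (Finset.le_sup' id (Finset.mem_erase.mpr ⟨hbne, hb⟩)) le_sup_right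
    exact hIdisj i _ hsupI hsupF
  refine ⟨fun i => (I i)ᶜ, ?_, ?_⟩
  · intro i
    refine ⟨⟨fun x z hx hxz hz => hx ((hIid i).1 hz hxz), fun x z hx hz hxz => ?_⟩, ?_⟩
    · exact (hprime i x z hxz).elim hx hz
    · intro x z hxz
      by_contra hc
      push_neg at hc
      simp only [Set.notMem_compl_iff] at hc
      exact hxz ((hIid i).2 _ _ hc.1 hc.2)
  · apply Set.Subset.antisymm
    · intro x hx
      rw [Set.mem_iInter]
      exact fun i hxI => hIdisj i x hxI hx
    · intro a ha
      rw [Set.mem_iInter] at ha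
      by_contra haF
      have haI : ∀ i, a ∉ I i := ha
      have hwI : ∀ i, a ⊓ y i ∉ I i := fun i h =>
        (hprime i a (y i) h).elim (haI i) (hyiI i)
      have hvex : ∀ i, ∃ v ∈ I i, (a ⊓ y i) ⊔ v ∈ F := fun i =>
        maximal_ideal_join hF.1 (hIid i) (hIne i) (hImax i) (hwI i)
      choose v hvI hvF using hvex
      have hU : (Finset.univ : Finset (Fin m)).Nonempty := Finset.univ_nonempty
      have htF : Finset.univ.inf' hU (fun i => (a ⊓ y i) ⊔ v i) ∈ F :=
        mem_inf'_of_filter hF hU (fun i _ => hvF i)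
      have hkey : Finset.univ.inf' hU (fun i => (a ⊓ y i) ⊔ v i) ≤
          Finset.univ.inf' hU v ⊔ Finset.univ.sup' hU (fun i => a ⊓ y i) := by
        have h1 : Finset.univ.inf' hU (fun i => (a ⊓ y i) ⊔ v i) ≤
            Finset.univ.inf' hU (fun i => Finset.univ.sup' hU (fun j => a ⊓ y j) ⊔ v i) := by
          apply Finset.le_inf'
          intro i _
          exact le_trans (Finset.inf'_le _ (Finset.mem_univ i))
            (sup_le_sup_right (Finset.le_sup' (fun j => a ⊓ y j) (Finset.mem_univ i)) _)
        rw [inf'_sup_const] at h1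
        exact le_trans h1 (le_of_eq (sup_comm _ _))
      set t : α := Finset.univ.inf' hU (fun i => (a ⊓ y i) ⊔ v i) with htdef
      set z : Fin (m + 1) → α :=
        Fin.cons (t ⊓ Finset.univ.inf' hU v) (fun i => t ⊓ (a ⊓ y i)) with hzdef
      have hz0 : z 0 = t ⊓ Finset.univ.inf' hU v := rfl
      have hzs : ∀ i : Fin m, z i.succ = t ⊓ (a ⊓ y i) := fun i => Fin.cons_succ _ _ i
      have hUm1 : (Finset.univ : Finset (Fin (m+1))).Nonempty := Finset.univ_nonempty
      have hztotal : Finset.univ.sup' hUm1 z ∈ Fᶜ := by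
        apply nideal_fin (by omega : 1 ≤ m) hok z
        intro j
        induction j using Fin.cases with
        | zero =>
          intro hne hmemF
          apply haF
          refine hF.1 hmemF ?_
          apply Finset.sup'_le
          intro k hk
          obtain ⟨l, rfl⟩ := Fin.eq_succ_of_ne_zero (Finset.mem_erase.mp hk).1
          rw [hzs]
          exact le_trans inf_le_right inf_le_left
        | succ i =>
          intro hne hmemF
          refine hIdisj i _ ?_ hmemF
          apply mem_sup'_of_ideal (hIid i)
          intro k hk
          have hkne : k ≠ i.succ := (Finset.mem_erase.mp hk).1
          rcases eq_or_ne k 0 with rfl | hk0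
          · refine (hIid i).1 (hvI i) ?_
            rw [hz0]
            exact le_trans inf_le_right (Finset.inf'_le v (Finset.mem_univ i))
          · obtain ⟨l, rfl⟩ := Fin.eq_succ_of_ne_zero hk0
            have hli : l ≠ i := fun he => hkne (by rw [he])
            refine (hIid i).1 (hyI i l hli) ?_
            rw [hzs]
            exact le_trans inf_le_right inf_le_right
      have httotal : t ≤ Finset.univ.sup' hUm1 z := by
        have h2 : t = (t ⊓ Finset.univ.inf' hU v) ⊔
            (t ⊓ Finset.univ.sup' hU (fun i => a ⊓ y i)) := by
          rw [← inf_sup_left]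
          exact (inf_eq_left.mpr hkey).symm
        refine le_trans (le_of_eq h2) (sup_le ?_ ?_)
        · rw [← hz0]
          exact Finset.le_sup' z (Finset.mem_univ (0 : Fin (m+1)))
        · rw [← sup'_inf_const hU t (fun i => a ⊓ y i)]
          apply Finset.sup'_le
          intro i _
          rw [← hzs]
          exact Finset.le_sup' z (Finset.mem_univ i.succ)
      exact hztotal (hF.1 htF httotal)

/-- Every filter whose complement is an `n`-ideal (`n ≥ 1`) is an intersection of
`n` prime filters. -/
theorem primes_decomposition {F : Set α} (hF : IsLatFilter F) :
    ∀ n : ℕ, 1 ≤ n → IsNIdeal n Fᶜ →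
      ∃ P : Fin n → Set α, (∀ i, IsLatFilter (P i) ∧ IsPrimeUpset (P i)) ∧ F = ⋂ i, P i := by
  intro n hn
  induction n, hn using Nat.le_induction with
  | base =>
    intro h1
    refine ⟨fun _ => F, fun i => ⟨hF, ?_⟩, (Set.iInter_const F).symm⟩
    intro x y hxy
    by_contra hc
    push_neg at hc
    classical
    have hne : ({x, y} : Finset α).Nonempty := ⟨x, by simp⟩
    have hYI := h1.2 {x, y} hne ?_
    · have heq : ({x, y} : Finset α).sup' hne id = x ⊔ y := by simp
      rw [heq] at hYI
      exact hYI hxy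
    · intro X hX hXY hXc
      have hX1 : X.card = 1 := le_antisymm hXc hX.card_pos
      obtain ⟨b, rfl⟩ := Finset.card_eq_one.mp hX1
      rw [Finset.sup'_singleton]
      have hb := hXY (Finset.mem_singleton_self b)
      rcases Finset.mem_insert.mp hb with rfl | hb
      · exact hc.1
      · rw [Finset.mem_singleton.mp hb]
        exact hc.2
  | succ n hn ih =>
    intro hni
    by_cases hprev : IsNIdeal n Fᶜ
    · obtain ⟨P, hP, hFP⟩ := ih hprev
      refine ⟨Fin.snoc P Set.univ, ?_, ?_⟩
      · intro i
        refine Fin.lastCases ?_ (fun j => ?_) i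
        · rw [Fin.snoc_last]
          exact ⟨⟨fun _ _ _ _ => trivial, fun _ _ _ _ => trivial⟩, fun _ _ _ => Or.inl trivial⟩
        · rw [Fin.snoc_castSucc]
          exact hP j
      · rw [hFP]
        apply Set.Subset.antisymm
        · intro x hx
          rw [Set.mem_iInter] at hx ⊢
          intro i
          refine Fin.lastCases ?_ (fun j => ?_) i
          · rw [Fin.snoc_last]; trivial
          · rw [Fin.snoc_castSucc]; exact hx j
        · intro x hx
          rw [Set.mem_iInter] at hx ⊢
          intro j
          have := hx (Fin.castSucc j)
          rwa [Fin.snoc_castSucc] at this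
    · have hbad : ¬ IsNIdeal (n + 1 - 1) Fᶜ := by simpa using hprev
      obtain ⟨Y, hcard, hYne, hsupF, hprop⟩ :=
        exists_witness hF.1 (by omega : 1 ≤ n + 1) hni hbad
      exact step_decomp hF (by omega) hni Y hcard hYne hsupF hprop

end PrimeDecomp2
section DMHom
variable {L : Type*} [DeMorgan L]

theorem dm_dneg_inf (x y : L) : ∼(x ⊓ y) = ∼x ⊔ ∼y := by
  have h := DeMorgan.dneg_sup (∼x) (∼y)
  rw [DeMorgan.dneg_dneg, DeMorgan.dneg_dneg] at h
  calc ∼(x ⊓ y) = ∼(∼(∼x ⊔ ∼y)) := by rw [h]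
    _ = ∼x ⊔ ∼y := DeMorgan.dneg_dneg _

open Classical in
/-- The characteristic De Morgan map into `DM₁` associated to a prime filter. -/
noncomputable def chi (P : Set L) (x : L) : Bool × Bool :=
  (decide (x ∈ P), decide (∼x ∉ P))

theorem bool_inf_eq (a b : Bool) : a ⊓ b = (a && b) := by revert a b; decide
theorem bool_sup_eq (a b : Bool) : a ⊔ b = (a || b) := by revert a b; decide

open Classical in
theorem chi_spec (P : Set L) (hf : IsLatFilter P) (hp : IsPrimeUpset P) :
    (∀ x y : L, chi P (x ⊓ y) = chi P x ⊓ chi P y) ∧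
    (∀ x y : L, chi P (x ⊔ y) = chi P x ⊔ chi P y) ∧
    (∀ x : L, chi P (∼x) = ∼(chi P x)) ∧
    (∀ x : L, ((chi P x).1 = true ↔ x ∈ P)) := by
  have hinf : ∀ x y : L, x ⊓ y ∈ P ↔ x ∈ P ∧ y ∈ P := fun x y =>
    ⟨fun h => ⟨hf.1 h inf_le_left, hf.1 h inf_le_right⟩, fun ⟨h1, h2⟩ => hf.2 _ _ h1 h2⟩
  have hsup : ∀ x y : L, x ⊔ y ∈ P ↔ x ∈ P ∨ y ∈ P := fun x y =>
    ⟨hp x y, fun h => h.elim (fun h1 => hf.1 h1 le_sup_left) (fun h2 => hf.1 h2 le_sup_right)⟩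
  refine ⟨?_, ?_, ?_, ?_⟩
  · intro x y
    have h1 : (chi P (x ⊓ y)).1 = (chi P x ⊓ chi P y).1 := by
      show decide (x ⊓ y ∈ P) = decide (x ∈ P) ⊓ decide (y ∈ P)
      rw [bool_inf_eq, ← Bool.decide_and]
      exact decide_eq_decide.mpr (hinf x y)
    have h2 : (chi P (x ⊓ y)).2 = (chi P x ⊓ chi P y).2 := by
      show decide (∼(x ⊓ y) ∉ P) = decide (∼x ∉ P) ⊓ decide (∼y ∉ P)
      rw [bool_inf_eq, ← Bool.decide_and]
      apply decide_eq_decide.mpr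
      rw [dm_dneg_inf, hsup]
      tauto
    exact Prod.ext h1 h2
  · intro x y
    have h1 : (chi P (x ⊔ y)).1 = (chi P x ⊔ chi P y).1 := by
      show decide (x ⊔ y ∈ P) = decide (x ∈ P) ⊔ decide (y ∈ P)
      rw [bool_sup_eq, ← Bool.decide_or]
      exact decide_eq_decide.mpr (hsup x y)
    have h2 : (chi P (x ⊔ y)).2 = (chi P x ⊔ chi P y).2 := by
      show decide (∼(x ⊔ y) ∉ P) = decide (∼x ∉ P) ⊔ decide (∼y ∉ P)
      rw [bool_sup_eq, ← Bool.decide_or]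
      apply decide_eq_decide.mpr
      rw [DeMorgan.dneg_sup, hinf]
      tauto
    exact Prod.ext h1 h2
  · intro x
    have h1 : (chi P (∼x)).1 = (∼(chi P x)).1 := by
      show decide (∼x ∈ P) = !(decide (∼x ∉ P))
      rw [decide_not, Bool.not_not]
    have h2 : (chi P (∼x)).2 = (∼(chi P x)).2 := by
      show decide (∼(∼x) ∉ P) = !(decide (x ∈ P))
      rw [DeMorgan.dneg_dneg, decide_not]
    exact Prod.ext h1 h2
  · intro x
    exact decide_eq_true_iff

theorem decomp_to_hom {n : ℕ} (P : Fin n → Set L)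
    (hP : ∀ i, IsLatFilter (P i) ∧ IsPrimeUpset (P i)) {F : Set L} (hFP : F = ⋂ i, P i) :
    ∃ h : L → (Fin n → Bool × Bool), IsDMHom h ∧
      F = {x : L | ∀ i : Fin n, (h x i).1 = true} := by
  refine ⟨fun x i => chi (P i) x, ⟨?_, ?_, ?_⟩, ?_⟩
  · intro x y
    funext i
    exact (chi_spec (P i) (hP i).1 (hP i).2).1 x y
  · intro x y
    funext i
    exact (chi_spec (P i) (hP i).1 (hP i).2).2.1 x y
  · intro x
    funext i
    exact (chi_spec (P i) (hP i).1 (hP i).2).2.2.1 x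
  · rw [hFP]
    ext x
    rw [Set.mem_iInter]
    apply forall_congr'
    intro i
    exact ((chi_spec (P i) (hP i).1 (hP i).2).2.2.2 x).symm

-- Bool helpers for the converse direction
theorem bool_le_true {a b : Bool} (h : a ≤ b) (ha : a = true) : b = true := by
  revert h ha; revert a b; decide
theorem bool_inf_true {a b : Bool} (ha : a = true) (hb : b = true) : a ⊓ b = true := by
  revert ha hb; revert a b; decide

theorem bool_sup'_eq_true {β : Type*} {s : Finset β} (hs : s.Nonempty) (f : β → Bool) :
    s.sup' hs f = true ↔ ∃ b ∈ s, f b = true := by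
  induction hs using Finset.Nonempty.cons_induction with
  | singleton a => simp
  | cons a s ha hs ih =>
    rw [Finset.sup'_cons (H := hs), bool_sup_eq, Bool.or_eq_true, ih]
    simp
end DMHom
/-- `n`-prime filters (filters whose complement is an `n`-ideal) are precisely
the preimages of the designated set of the direct power `(DM₁)ⁿ` under De Morgan
homomorphisms. -/
theorem statement13 {L : Type*} [DeMorgan L] [Nonempty L] (n : ℕ) (hn : 1 ≤ n)
    (F : Set L) :
    (IsLatFilter F ∧ IsNIdeal n Fᶜ) ↔
      ∃ h : L → (Fin n → Bool × Bool), IsDMHom h ∧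
        F = {x : L | ∀ i : Fin n, (h x i).1 = true} := by
  constructor
  · rintro ⟨hFil, hnid⟩
    obtain ⟨P, hP, hFP⟩ := primes_decomposition hFil n hn hnid
    exact decomp_to_hom P hP hFP
  · rintro ⟨h, ⟨hinf, hsup, hneg⟩, rfl⟩
    have hmono : ∀ x y : L, x ≤ y → h x ≤ h y := by
      intro x y hxy
      have hx : h x = h x ⊓ h y := by rw [← hinf, inf_eq_left.mpr hxy]
      rw [hx]
      exact inf_le_right
    have hupset : IsUpset {x : L | ∀ i : Fin n, (h x i).1 = true} := by
      intro x y hx hxy i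
      exact bool_le_true (Prod.le_def.mp (hmono x y hxy i)).1 (hx i)
    refine ⟨⟨hupset, ?_⟩, ?_, ?_⟩
    · intro x y hx hy i
      rw [hinf]
      show (h x i).1 ⊓ (h y i).1 = true
      exact bool_inf_true (hx i) (hy i)
    · exact fun x y hx hyx hy => hx (hupset hy hyx)
    · intro Y hY hyp
      simp only [Set.mem_compl_iff]
      intro hmemF
      have hmapsup : h (Y.sup' hY id) = Y.sup' hY (fun a => h a) := by
        have := Finset.comp_sup'_eq_sup'_comp hY (f := id) h (fun a b => hsup a b)
        simpa using this
      have hwit : ∀ i : Fin n, ∃ b ∈ Y, (h b i).1 = true := by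
        intro i
        have h1 : (h (Y.sup' hY id) i).1 = true := hmemF i
        rw [hmapsup, Finset.sup'_apply] at h1
        have h2 : (Y.sup' hY (fun a => h a i)).1 = Y.sup' hY (fun a => (h a i).1) :=
          Finset.comp_sup'_eq_sup'_comp hY Prod.fst (fun p q => rfl)
        rw [h2] at h1
        exact (bool_sup'_eq_true hY _).mp h1
      choose g hgY hgtrue using hwit
      classical
      haveI : Nonempty (Fin n) := ⟨⟨0, by omega⟩⟩
      have hXne : (Finset.image g Finset.univ).Nonempty :=
        ⟨g (Classical.arbitrary _), Finset.mem_image_of_mem g (Finset.mem_univ _)⟩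
      have hXY : Finset.image g Finset.univ ⊆ Y := by
        intro b hb
        obtain ⟨i, -, rfl⟩ := Finset.mem_image.mp hb
        exact hgY i
      have hXc : (Finset.image g Finset.univ).card ≤ n :=
        le_trans Finset.card_image_le (by simp)
      apply hyp _ hXne hXY hXc
      intro i
      have hle : g i ≤ (Finset.image g Finset.univ).sup' hXne id :=
        Finset.le_sup' id (Finset.mem_image_of_mem g (Finset.mem_univ i))
      exact bool_le_true (Prod.le_def.mp (hmono _ _ hle i)).1 (hgtrue i)
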